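/- Let x0 < 0 and let g(x) = (9x(2x0 − x)/4)^{1/3} for x ∈ [2x0, 0] be the normal Tricomi curve. Then: (i) g(2x0) = g(0) = 0 and g(x) > 0 for all x ∈ (2x0, 0); (ii) the one-sided difference quotients satisfy lim_{t→0+} g(2x0 + t)/t = +∞ and lim_{t→0−} g(t)/t = −∞; (iii) g is twice continuously differentiable on (2x0, 0); (iv) g''(x) ≤ −K0 for all x ∈ (2x0, 0), where K0 = (3 x0^4 / 2)^{−1/3}, and moreover g''(x0) = −K0. -/

import Mathlib

open Set Filter


noncomputable def tricU (x0 x : ℝ) : ℝ := 9 * x * (2 * x0 - x) / 4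

lemma tricU_pos {x0 : ℝ} (hx0 : x0 < 0) {x : ℝ} (hx : x ∈ Ioo (2*x0) 0) :
    0 < tricU x0 x := by
  obtain ⟨h1, h2⟩ := hx
  unfold tricU; nlinarith

lemma hasDerivAt_tricU (x0 x : ℝ) : HasDerivAt (tricU x0) (9/2*(x0 - x)) x := by
  have h : HasDerivAt (fun x : ℝ => 9 * x * (2*x0 - x) / 4)
      (((9*1) * (2*x0 - x) + (9*x) * (0 - 1)) / 4) x :=
    ((((hasDerivAt_id x).const_mul 9).mul
      ((hasDerivAt_const x (2*x0)).sub (hasDerivAt_id x))).div_const 4)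
  convert h using 1
  · rfl
  ring

lemma hasDerivAt_g1 {x0 x : ℝ} (hu : 0 < tricU x0 x) :
    HasDerivAt (fun x => tricU x0 x ^ ((1:ℝ)/3))
      ((1/3) * tricU x0 x ^ (-(2:ℝ)/3) * (9/2*(x0-x))) x := by
  have h := (Real.hasDerivAt_rpow_const (x := tricU x0 x) (p := (1:ℝ)/3)
      (Or.inl hu.ne')).comp x (hasDerivAt_tricU x0 x)
  exact h.congr_deriv (by norm_num)

lemma hasDerivAt_g2 {x0 x : ℝ} (hu : 0 < tricU x0 x) :
    HasDerivAt (fun x => (1/3) * tricU x0 x ^ (-(2:ℝ)/3) * (9/2*(x0-x)))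
      (-(9/8) * tricU x0 x ^ (-(5:ℝ)/3) * ((x - x0)^2 + 3*x0^2)) x := by
  have h1 : HasDerivAt (fun x => (1/3) * tricU x0 x ^ (-(2:ℝ)/3))
      ((1/3) * ((-(2:ℝ)/3) * tricU x0 x ^ (-(2:ℝ)/3 - 1) * (9/2*(x0-x)))) x := by
    exact ((Real.hasDerivAt_rpow_const (x := tricU x0 x) (p := -(2:ℝ)/3)
      (Or.inl hu.ne')).comp x (hasDerivAt_tricU x0 x)).const_mul _
  have h2 : HasDerivAt (fun x : ℝ => 9/2*(x0-x)) (9/2*(0-1)) x :=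
    ((hasDerivAt_const x x0).sub (hasDerivAt_id x)).const_mul _
  have h := h1.mul h2
  refine h.congr_deriv ?_
  have e1 : (-(2:ℝ)/3 - 1) = -(5:ℝ)/3 := by norm_num
  have e2 : tricU x0 x ^ (-(2:ℝ)/3) = tricU x0 x ^ (-(5:ℝ)/3) * tricU x0 x := by
    rw [← Real.rpow_add_one hu.ne']
    norm_num
  rw [e1, e2]
  have hux : tricU x0 x = 9 * x * (2*x0 - x) / 4 := rfl
  rw [hux]
  ring

lemma deriv_g_eq {x0 : ℝ} (hx0 : x0 < 0) {x : ℝ} (hx : x ∈ Ioo (2*x0) 0) :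
    deriv (fun x => tricU x0 x ^ ((1:ℝ)/3)) x
      = (1/3) * tricU x0 x ^ (-(2:ℝ)/3) * (9/2*(x0-x)) :=
  (hasDerivAt_g1 (tricU_pos hx0 hx)).deriv

lemma deriv2_g_eq {x0 : ℝ} (hx0 : x0 < 0) {x : ℝ} (hx : x ∈ Ioo (2*x0) 0) :
    deriv (deriv (fun x => tricU x0 x ^ ((1:ℝ)/3))) x
      = -(9/8) * tricU x0 x ^ (-(5:ℝ)/3) * ((x - x0)^2 + 3*x0^2) := by
  have hev : deriv (fun x => tricU x0 x ^ ((1:ℝ)/3)) =ᶠ[nhds x]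
      (fun x => (1/3) * tricU x0 x ^ (-(2:ℝ)/3) * (9/2*(x0-x))) := by
    filter_upwards [isOpen_Ioo.mem_nhds hx] with y hy
    exact deriv_g_eq hx0 hy
  rw [hev.deriv_eq]
  exact (hasDerivAt_g2 (tricU_pos hx0 hx)).deriv

lemma const_c1 : ((3:ℝ)/2) ^ (-(1:ℝ)/3) * ((9:ℝ)/4) ^ ((5:ℝ)/3) = 27/8 := by
  have h : ((9:ℝ)/4) = ((3:ℝ)/2) ^ ((2:ℕ):ℝ) := by
    rw [Real.rpow_natCast]; norm_num
  rw [h, ← Real.rpow_mul (by norm_num : (0:ℝ) ≤ 3/2),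
    ← Real.rpow_add (by norm_num : (0:ℝ) < 3/2)]
  have he : (-(1:ℝ)/3 + ((2:ℕ):ℝ) * ((5:ℝ)/3)) = ((3:ℕ):ℝ) := by push_cast; norm_num
  rw [he, Real.rpow_natCast]
  norm_num

lemma const_c2 : (27/8:ℝ) * ((9:ℝ)/4) ^ (-(5:ℝ)/3) = ((3:ℝ)/2) ^ (-(1:ℝ)/3) := by
  have h1 : ((9:ℝ)/4) ^ ((5:ℝ)/3) * ((9:ℝ)/4) ^ (-(5:ℝ)/3) = 1 := by
    rw [← Real.rpow_add (by norm_num : (0:ℝ) < 9/4)]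
    norm_num
  rw [← const_c1, mul_assoc, h1, mul_one]

lemma hK0_decomp {x0 : ℝ} (hx0 : x0 < 0) (K0 : ℝ)
    (hK0 : K0 = (3 * x0 ^ 4 / 2) ^ (-(1:ℝ)/3)) :
    K0 = ((3:ℝ)/2) ^ (-(1:ℝ)/3) * (x0^2) ^ (-(2:ℝ)/3) := by
  have ha : (0:ℝ) < x0^2 := by nlinarith
  have h : 3 * x0^4 / 2 = (3/2) * (x0^2)^2 := by ring
  rw [hK0, h, Real.mul_rpow (by norm_num) (by positivity)]
  congr 1
  rw [← Real.rpow_natCast (x0^2) 2, ← Real.rpow_mul ha.le]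
  norm_num

lemma key_ineq {x0 : ℝ} (hx0 : x0 < 0) (K0 : ℝ)
    (hK0 : K0 = (3 * x0 ^ 4 / 2) ^ (-(1:ℝ)/3)) {x : ℝ} (hx : x ∈ Ioo (2*x0) 0) :
    -(9/8) * tricU x0 x ^ (-(5:ℝ)/3) * ((x - x0)^2 + 3*x0^2) ≤ -K0 := by
  obtain ⟨h1, h2⟩ := hx
  set a := x0^2 with ha_def
  set s := (x - x0)^2 with hs_def
  have ha : (0:ℝ) < a := by nlinarith
  have hs : (0:ℝ) ≤ s := sq_nonneg _
  have hsa : s < a := by nlinarith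
  have hu : tricU x0 x = 9/4 * (a - s) := by
    simp only [tricU, ha_def, hs_def]; ring
  have hupos : (0:ℝ) < tricU x0 x := by rw [hu]; nlinarith
  have hK : K0 = ((3:ℝ)/2) ^ (-(1:ℝ)/3) * a ^ (-(2:ℝ)/3) := hK0_decomp hx0 K0 hK0
  -- reduce to K0 * u^(5/3) ≤ 9/8 * (s + 3a)
  have hu53pos : (0:ℝ) < tricU x0 x ^ ((5:ℝ)/3) := Real.rpow_pos_of_pos hupos _
  have hne : tricU x0 x ^ (-(5:ℝ)/3) = (tricU x0 x ^ ((5:ℝ)/3))⁻¹ := by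
    rw [show -(5:ℝ)/3 = -((5:ℝ)/3) by norm_num, Real.rpow_neg hupos.le]
  have hmain : K0 * tricU x0 x ^ ((5:ℝ)/3) ≤ 9/8 * (s + 3*a) := by
    have hexp : tricU x0 x ^ ((5:ℝ)/3)
        = (9/4:ℝ) ^ ((5:ℝ)/3) * ((a - s) ^ ((2:ℝ)/3) * (a - s)) := by
      rw [hu, Real.mul_rpow (by norm_num) (by linarith),
        show (5:ℝ)/3 = (2:ℝ)/3 + 1 by norm_num,
        Real.rpow_add_one (by linarith : a - s ≠ 0)]
    have hb : (a - s) ^ ((2:ℝ)/3) ≤ a ^ ((2:ℝ)/3) :=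
      Real.rpow_le_rpow (by linarith) (by linarith) (by norm_num)
    have haa : a ^ (-(2:ℝ)/3) * a ^ ((2:ℝ)/3) = 1 := by
      rw [← Real.rpow_add ha]; norm_num
    have hbpos : (0:ℝ) < a ^ (-(2:ℝ)/3) := Real.rpow_pos_of_pos ha _
    have hkey : a ^ (-(2:ℝ)/3) * (a - s) ^ ((2:ℝ)/3) ≤ 1 := by
      calc a ^ (-(2:ℝ)/3) * (a - s) ^ ((2:ℝ)/3)
          ≤ a ^ (-(2:ℝ)/3) * a ^ ((2:ℝ)/3) := by
            exact mul_le_mul_of_nonneg_left hb hbpos.le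
        _ = 1 := haa
    rw [hK, hexp]
    have hc : ((3:ℝ)/2) ^ (-(1:ℝ)/3) * (9/4:ℝ) ^ ((5:ℝ)/3) = 27/8 := const_c1
    have has : (0:ℝ) ≤ a - s := by linarith
    calc ((3:ℝ)/2) ^ (-(1:ℝ)/3) * a ^ (-(2:ℝ)/3)
          * ((9/4:ℝ) ^ ((5:ℝ)/3) * ((a - s) ^ ((2:ℝ)/3) * (a - s)))
        = (27/8) * (a ^ (-(2:ℝ)/3) * (a - s) ^ ((2:ℝ)/3)) * (a - s) := by
          rw [← hc]; ring
      _ ≤ (27/8) * 1 * (a - s) := by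
          apply mul_le_mul_of_nonneg_right _ has
          exact mul_le_mul_of_nonneg_left hkey (by norm_num)
      _ ≤ 9/8 * (s + 3*a) := by nlinarith
  have h2' : K0 ≤ 9/8 * (s + 3*a) / tricU x0 x ^ ((5:ℝ)/3) := by
    rw [le_div_iff₀ hu53pos]; exact hmain
  rw [hne]
  have : -(9/8) * (tricU x0 x ^ ((5:ℝ)/3))⁻¹ * (s + 3*a)
      = -(9/8 * (s + 3*a) / tricU x0 x ^ ((5:ℝ)/3)) := by
    field_simp
  rw [this]
  linarith

lemma key_eq {x0 : ℝ} (hx0 : x0 < 0) (K0 : ℝ)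
    (hK0 : K0 = (3 * x0 ^ 4 / 2) ^ (-(1:ℝ)/3)) :
    -(9/8) * tricU x0 x0 ^ (-(5:ℝ)/3) * ((x0 - x0)^2 + 3*x0^2) = -K0 := by
  have ha : (0:ℝ) < x0^2 := by nlinarith
  have hu : tricU x0 x0 = 9/4 * x0^2 := by simp only [tricU]; ring
  have hK : K0 = ((3:ℝ)/2) ^ (-(1:ℝ)/3) * (x0^2) ^ (-(2:ℝ)/3) := hK0_decomp hx0 K0 hK0
  rw [hu, hK, Real.mul_rpow (by norm_num) ha.le]
  have haa : (x0^2) * (x0^2) ^ (-(5:ℝ)/3) = (x0^2) ^ (-(2:ℝ)/3) := by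
    rw [show (-(2:ℝ)/3) = (-(5:ℝ)/3) + 1 by norm_num, Real.rpow_add_one ha.ne']
    ring
  have hc := const_c2
  calc -(9/8) * ((9/4:ℝ) ^ (-(5:ℝ)/3) * (x0^2) ^ (-(5:ℝ)/3)) * ((x0 - x0)^2 + 3*x0^2)
      = -((27/8) * (9/4:ℝ) ^ (-(5:ℝ)/3)) * ((x0^2) * (x0^2) ^ (-(5:ℝ)/3)) := by ring
    _ = -(((3:ℝ)/2) ^ (-(1:ℝ)/3) * (x0^2) ^ (-(2:ℝ)/3)) := by rw [haa, ← hc]; ring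

lemma tendsto_inv_rpow23 :
    Tendsto (fun t : ℝ => (t ^ ((2:ℝ)/3))⁻¹) (nhdsWithin 0 (Ioi 0)) atTop := by
  apply tendsto_inv_nhdsGT_zero.comp
  apply tendsto_nhdsWithin_of_tendsto_nhds_of_eventually_within
  · have hc : ContinuousAt (fun t : ℝ => t ^ ((2:ℝ)/3)) 0 :=
      Real.continuousAt_rpow_const 0 _ (Or.inr (by norm_num))
    have := hc.tendsto.mono_left (nhdsWithin_le_nhds (s := Ioi (0:ℝ)))
    simpa [Real.zero_rpow (by norm_num : ((2:ℝ)/3) ≠ 0)] using this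
  · filter_upwards [self_mem_nhdsWithin] with t ht
    exact Real.rpow_pos_of_pos ht _

lemma tendsto_right {x0 : ℝ} (hx0 : x0 < 0) :
    Tendsto (fun t : ℝ => tricU x0 (2*x0 + t) ^ ((1:ℝ)/3) / t)
      (nhdsWithin 0 (Ioi 0)) atTop := by
  set m : ℝ := 9/4 * (-x0) with hm_def
  have hm : (0:ℝ) < m := by rw [hm_def]; nlinarith
  have hmp : (0:ℝ) < m ^ ((1:ℝ)/3) := Real.rpow_pos_of_pos hm _
  have hbase : Tendsto (fun t : ℝ => m ^ ((1:ℝ)/3) * (t ^ ((2:ℝ)/3))⁻¹)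
      (nhdsWithin 0 (Ioi 0)) atTop := tendsto_inv_rpow23.const_mul_atTop hmp
  apply tendsto_atTop_mono' _ _ hbase
  have hmem : Ioo (0:ℝ) (-x0) ∈ nhdsWithin (0:ℝ) (Ioi 0) :=
    Ioo_mem_nhdsGT_of_mem ⟨le_refl _, by linarith⟩
  filter_upwards [hmem] with t ht
  obtain ⟨ht0, ht1⟩ := ht
  have hlb : m * t ≤ tricU x0 (2*x0 + t) := by
    simp only [tricU, hm_def]; nlinarith
  have hmt : (0:ℝ) ≤ m * t := by positivity
  have h1 : m ^ ((1:ℝ)/3) * t ^ ((1:ℝ)/3) ≤ tricU x0 (2*x0 + t) ^ ((1:ℝ)/3) := by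
    rw [← Real.mul_rpow hm.le ht0.le]
    exact Real.rpow_le_rpow hmt hlb (by norm_num)
  have h2 : m ^ ((1:ℝ)/3) * t ^ ((1:ℝ)/3) / t = m ^ ((1:ℝ)/3) * (t ^ ((2:ℝ)/3))⁻¹ := by
    rw [mul_div_assoc]
    congr 1
    rw [show t ^ ((1:ℝ)/3) / t = t ^ ((1:ℝ)/3 - 1) by
      rw [Real.rpow_sub ht0, Real.rpow_one],
      show (1:ℝ)/3 - 1 = -((2:ℝ)/3) by norm_num, Real.rpow_neg ht0.le]
  rw [← h2]
  exact div_le_div_of_nonneg_right h1 ht0.le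

lemma tendsto_neg_Iio_Ioi : Tendsto (fun t : ℝ => -t) (nhdsWithin 0 (Iio 0)) (nhdsWithin 0 (Ioi 0)) := by
  apply tendsto_nhdsWithin_of_tendsto_nhds_of_eventually_within
  · have : Tendsto (fun t : ℝ => -t) (nhds 0) (nhds (-0)) := (continuous_neg.tendsto 0)
    simpa using this.mono_left (nhdsWithin_le_nhds (s := Iio (0:ℝ)))
  · filter_upwards [self_mem_nhdsWithin] with t ht
    simpa using ht

lemma tendsto_left {x0 : ℝ} (hx0 : x0 < 0) :
    Tendsto (fun t : ℝ => tricU x0 t ^ ((1:ℝ)/3) / t)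
      (nhdsWithin 0 (Iio 0)) atBot := by
  set m : ℝ := 9/4 * (-x0) with hm_def
  have hm : (0:ℝ) < m := by rw [hm_def]; nlinarith
  have hmp : (0:ℝ) < m ^ ((1:ℝ)/3) := Real.rpow_pos_of_pos hm _
  have hbase : Tendsto (fun t : ℝ => -(m ^ ((1:ℝ)/3) * ((-t) ^ ((2:ℝ)/3))⁻¹))
      (nhdsWithin 0 (Iio 0)) atBot := by
    have hpos : Tendsto (fun t : ℝ => m ^ ((1:ℝ)/3) * ((-t) ^ ((2:ℝ)/3))⁻¹)
        (nhdsWithin 0 (Iio 0)) atTop :=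
      (tendsto_inv_rpow23.const_mul_atTop hmp).comp tendsto_neg_Iio_Ioi
    exact tendsto_neg_atTop_atBot.comp hpos
  apply tendsto_atBot_mono' _ _ hbase
  have hmem : Ioo (x0:ℝ) 0 ∈ nhdsWithin (0:ℝ) (Iio 0) :=
    Ioo_mem_nhdsLT_of_mem ⟨hx0, le_refl _⟩
  filter_upwards [hmem] with t ht
  obtain ⟨ht1, ht0⟩ := ht
  have hnt : (0:ℝ) < -t := by linarith
  have hlb : m * (-t) ≤ tricU x0 t := by
    simp only [tricU, hm_def]; nlinarith
  have h1 : m ^ ((1:ℝ)/3) * (-t) ^ ((1:ℝ)/3) ≤ tricU x0 t ^ ((1:ℝ)/3) := by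
    rw [← Real.mul_rpow hm.le hnt.le]
    exact Real.rpow_le_rpow (by positivity) hlb (by norm_num)
  have h2 : m ^ ((1:ℝ)/3) * (-t) ^ ((1:ℝ)/3) / t
      = -(m ^ ((1:ℝ)/3) * (((-t)) ^ ((2:ℝ)/3))⁻¹) := by
    have e : (-t) ^ ((1:ℝ)/3) = ((-t) ^ ((2:ℝ)/3))⁻¹ * (-t) := by
      rw [← Real.rpow_neg hnt.le, ← show (1:ℝ)/3 - 1 = -((2:ℝ)/3) by norm_num,
        Real.rpow_sub hnt, Real.rpow_one]
      exact (div_mul_cancel₀ _ hnt.ne').symm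
    rw [div_eq_iff ht0.ne, e]
    ring
  have h3 : tricU x0 t ^ ((1:ℝ)/3) / t ≤ m ^ ((1:ℝ)/3) * (-t) ^ ((1:ℝ)/3) / t := by
    have hdiff : (tricU x0 t ^ ((1:ℝ)/3) - m ^ ((1:ℝ)/3) * (-t) ^ ((1:ℝ)/3)) / t ≤ 0 :=
      div_nonpos_of_nonneg_of_nonpos (by linarith) ht0.le
    have := sub_div (tricU x0 t ^ ((1:ℝ)/3)) (m ^ ((1:ℝ)/3) * (-t) ^ ((1:ℝ)/3)) t
    linarith [this ▸ hdiff]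
  rw [h2] at h3
  exact h3

lemma contDiffOn_g {x0 : ℝ} (hx0 : x0 < 0) :
    ContDiffOn ℝ 2 (fun x => tricU x0 x ^ ((1:ℝ)/3)) (Ioo (2*x0) 0) := by
  intro x hx
  apply ContDiffAt.contDiffWithinAt
  have hu : ContDiffAt ℝ 2 (tricU x0) x := by
    have : ContDiff ℝ 2 (tricU x0) := by
      unfold tricU
      exact ((contDiff_const.mul contDiff_id).mul
        (contDiff_const.sub contDiff_id)).div_const 4
    exact this.contDiffAt
  exact (Real.contDiffAt_rpow_const_of_ne (tricU_pos hx0 hx).ne').comp x hu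

/-- Properties (g1)-(g4) of the normal Tricomi curve
`g(x) = (9x(2x0 - x)/4)^(1/3)` on `[2x0, 0]`, for `x0 < 0`, with
`K0 = (3 x0^4 / 2)^(-1/3)`. -/
theorem normal_tricomi_curve_properties
    (x0 : ℝ) (hx0 : x0 < 0)
    (g : ℝ → ℝ)
    (hg : ∀ x : ℝ, g x = (9 * x * (2 * x0 - x) / 4) ^ ((1 : ℝ) / 3))
    (K0 : ℝ) (hK0 : K0 = (3 * x0 ^ 4 / 2) ^ (-(1 : ℝ) / 3)) :
    -- (i)
    (g (2 * x0) = 0 ∧ g 0 = 0 ∧ ∀ x ∈ Ioo (2 * x0) 0, 0 < g x) ∧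
    -- (ii)
    (Tendsto (fun t : ℝ => g (2 * x0 + t) / t) (nhdsWithin 0 (Ioi 0)) atTop ∧
      Tendsto (fun t : ℝ => g t / t) (nhdsWithin 0 (Iio 0)) atBot) ∧
    -- (iii)
    ContDiffOn ℝ 2 g (Ioo (2 * x0) 0) ∧
    -- (iv)
    ((∀ x ∈ Ioo (2 * x0) 0, deriv (deriv g) x ≤ -K0) ∧
      deriv (deriv g) x0 = -K0) := by
  have hgf : g = fun x => tricU x0 x ^ ((1:ℝ)/3) := funext fun x => by
    rw [hg]; rfl
  subst hgf
  refine ⟨⟨?_, ?_, ?_⟩, ⟨tendsto_right hx0, tendsto_left hx0⟩, contDiffOn_g hx0, ?_, ?_⟩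
  · simp [tricU, Real.zero_rpow (by norm_num : ((1:ℝ)/3) ≠ 0)]
  · simp [tricU, Real.zero_rpow (by norm_num : ((1:ℝ)/3) ≠ 0)]
  · intro x hx
    exact Real.rpow_pos_of_pos (tricU_pos hx0 hx) _
  · intro x hx
    rw [deriv2_g_eq hx0 hx]
    exact key_ineq hx0 K0 hK0 hx
  · have hx0mem : x0 ∈ Ioo (2*x0) 0 := ⟨by linarith, hx0⟩
    rw [deriv2_g_eq hx0 hx0mem]
    exact key_eq hx0 K0 hK0
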